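/- Let A be a Hopf algebra over k with bijective antipode S, and let Ω¹(A) be a left covariant first order differential calculus on A determined by: a free left A-module basis ω₁, …, ω_n of left-invariant one-forms, and k-linear maps θ_ij, χ_i : A → k (i,j = 1,…,n) satisfying θ_ij(ab) = Σ_k θ_ik(a)θ_kj(b), θ_ij(1) = δ_ij, χ_i(ab) = Σ_j χ_j(a)θ_ji(b) + ε(a)χ_i(b), with ω_i·a = Σ_j (θ_ij ⊳ a) ω_j and d(a) = Σ_i (χ_i ⊳ a) ω_i, where f ⊳ a = (id ⊗ f)(Δ(a)). Let ξ_i ∈ Hom_A(Ω¹(A), A) be the right dual basis, ξ_i(ω_j) = δ_ij. Then the map ∇ : Hom_A(Ω¹(A), A) → A, ∇(f) = Σ_i (χ_i ∘ S⁻²) ⊳ f(ω_i), is the unique hom-connection on A with respect to Ω¹(A) such that ∇(ξ_i) = 0 for all i = 1, …, n. -/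

import Mathlib

/-!
# Statement 13 (Theorem 4.1(1))

Let `A` be a Hopf algebra with bijective antipode `S` and let `Ω¹(A)` be a left
covariant first order differential calculus on `A`, determined by a free left
`A`-basis of left-invariant one-forms `ω₁, …, ω_n` and functionals
`θ_ij, χ_i : A → k` with `θ_ij(ab) = Σ_l θ_il(a) θ_lj(b)`, `θ_ij(1) = δ_ij`,
`χ_i(ab) = Σ_j χ_j(a) θ_ji(b) + ε(a) χ_i(b)`, commutation rules
`ω_i a = Σ_j (θ_ij ⊳ a) ω_j` and differential `d a = Σ_i (χ_i ⊳ a) ω_i`, where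
`f ⊳ a = (id ⊗ f)(Δ a)`.  Let `ξ_i` be the right dual basis, `ξ_i(ω_j) = δ_ij`.
Then `∇(f) = Σ_i (χ_i ∘ S⁻²) ⊳ f(ω_i)` is the unique hom-connection on `A` with
`∇(ξ_i) = 0`.

`Ω¹(A)` is modelled in left coordinates as `Fin n → A`, with right `A`-action
`(x · a)_i = Σ_j x_j ((θ_ji) ⊳ a)`; `Hom_A(Ω¹(A), A)` is the submodule of right
`A`-linear maps in `(Fin n → A) →ₗ[k] A`.
-/

open TensorProduct

namespace Stmt13

variable {k A : Type*} [Field k] [Ring A] [HopfAlgebra k A] {n : ℕ}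

/-- The left action `f ⊳ a = (id ⊗ f)(Δ a)` of a functional `f : A → k` on `A`. -/
noncomputable def hit (f : A →ₗ[k] k) : A →ₗ[k] A :=
  (TensorProduct.rid k A).toLinearMap ∘ₗ (LinearMap.lTensor A f) ∘ₗ Coalgebra.comul

variable (θ : Fin n → Fin n → (A →ₗ[k] k))

/-- The right `A`-action on `Ω¹(A)` in left coordinates:
`(x · a)_i = Σ_j x_j (θ_ji ⊳ a)`. -/
noncomputable def ract (x : Fin n → A) (a : A) : Fin n → A :=
  fun i => ∑ j, x j * hit (θ j i) a

/-- Left multiplication on `Ω¹(A)` (coordinatewise). -/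
def lmulPi (a : A) : (Fin n → A) →ₗ[k] (Fin n → A) where
  toFun x := fun i => a * x i
  map_add' x y := by funext i; simp [mul_add]
  map_smul' c x := by funext i; simp [mul_smul_comm]

/-- `Hom_A(Ω¹(A), A)`: the right `A`-linear maps `Ω¹(A) → A`. -/
noncomputable def homD : Submodule k ((Fin n → A) →ₗ[k] A) where
  carrier := {f | ∀ (x : Fin n → A) (a : A), f (ract θ x a) = f x * a}
  add_mem' {f g} hf hg := by
    intro x a
    simp only [LinearMap.add_apply, hf x a, hg x a, add_mul]
  zero_mem' := by intro x a; simp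
  smul_mem' c f hf := by
    intro x a
    simp only [LinearMap.smul_apply, hf x a, smul_mul_assoc]

/-- The left-invariant basis `ω_i` of `Ω¹(A)`. -/
def om (i : Fin n) : Fin n → A := Pi.single i 1

/-- `d : A → Ω¹(A)` in coordinates: `d a = ((χ_i ⊳ a))_i`. -/
noncomputable def dvec (χ : Fin n → (A →ₗ[k] k)) (a : A) : Fin n → A :=
  fun i => hit (χ i) a

lemma ract_lmulPi (a c : A) (x : Fin n → A) :
    ract θ (lmulPi (k := k) a x) c = lmulPi (k := k) a (ract θ x c) := by
  funext i; simp [ract, lmulPi, Finset.mul_sum, mul_assoc]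

/-- The right action of `a : A` on `f ∈ Hom_A(Ω¹(A), A)`: `(f·a)(x) = f(a • x)`. -/
noncomputable def rAct (f : homD θ) (a : A) : homD θ :=
  ⟨f.1 ∘ₗ lmulPi a, by
    intro x c
    simp only [LinearMap.comp_apply]
    rw [← ract_lmulPi, f.2 _ c]⟩

/-- The hom-connection property:  `∇(f·a) = ∇(f)·a + f(da)`. -/
noncomputable def IsHomConn (χ : Fin n → (A →ₗ[k] k)) (nabla : homD θ →ₗ[k] A) : Prop :=
  ∀ (f : homD θ) (a : A),
    nabla (rAct θ f a) = nabla f * a + f.1 (dvec χ a)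


/-! ### Auxiliary Hopf-algebra lemmas -/

section HopfAux

open Coalgebra HopfAlgebra

lemma hit_repr (f : A →ₗ[k] k) {a : A} {ι : Type*} (r : Coalgebra.Repr k a ι) :
    hit f a = ∑ i ∈ r.index, f (r.right i) • r.left i := by
  simp only [hit, LinearMap.comp_apply, LinearEquiv.coe_coe]
  rw [← r.eq]
  simp

lemma counit_right_repr {a : A} {ι : Type*} (r : Coalgebra.Repr k a ι) :
    ∑ i ∈ r.index, counit (R := k) (r.right i) • r.left i = a := by
  have h := congrArg (TensorProduct.rid k A) (sum_tmul_counit_eq (R := k) r)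
  rw [map_sum] at h
  simp only [TensorProduct.rid_tmul, one_smul] at h
  exact h

lemma counit_left_repr {a : A} {ι : Type*} (r : Coalgebra.Repr k a ι) :
    ∑ i ∈ r.index, counit (R := k) (r.left i) • r.right i = a := by
  have h := congrArg (TensorProduct.lid k A) (sum_counit_tmul_eq (R := k) r)
  rw [map_sum] at h
  simp only [TensorProduct.lid_tmul, one_smul] at h
  exact h

lemma hit_counit (a : A) : hit (counit (R := k) (A := A)) a = a := by
  rw [hit_repr _ (Coalgebra.Repr.arbitrary k a)]
  exact counit_right_repr _

noncomputable def mulRepr {x y : A} {ι κ : Type*} (rx : Coalgebra.Repr k x ι) (ry : Coalgebra.Repr k y κ) :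
    Coalgebra.Repr k (x * y) (ι × κ) where
  index := rx.index ×ˢ ry.index
  left p := rx.left p.1 * ry.left p.2
  right p := rx.right p.1 * ry.right p.2
  eq := by
    have : CoalgebraStruct.comul (R := k) (x * y)
        = CoalgebraStruct.comul (R := k) x * CoalgebraStruct.comul (R := k) y :=
      Bialgebra.comul_mul x y
    rw [this, ← rx.eq, ← ry.eq, Finset.sum_mul_sum, Finset.sum_product]
    simp [Algebra.TensorProduct.tmul_mul_tmul]

lemma antipode_one : antipode (R := k) (1 : A) = 1 := by
  simpa [Algebra.TensorProduct.one_def] using mul_antipode_rTensor_comul_apply (R := k) (1 : A)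

lemma counit_antipode (a : A) :
    counit (R := k) (antipode (R := k) a) = counit (R := k) a := by
  set r := Coalgebra.Repr.arbitrary k a with hr
  have h1 : counit (R := k) (antipode (R := k) a)
      = ∑ i ∈ r.index, counit (R := k) (antipode (R := k) (r.left i)) * counit (R := k) (r.right i) := by
    conv_lhs => rw [← counit_right_repr r]
    rw [map_sum, map_sum]
    refine Finset.sum_congr rfl fun i _ => ?_
    simp only [map_smul, smul_eq_mul]; ring
  rw [h1]
  have h2 := congrArg (counit (R := k)) (sum_antipode_mul_eq_smul (R := k) r)
  rw [map_sum, map_smul] at h2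
  simp only [Bialgebra.counit_mul] at h2
  rw [h2]
  simp

/-- The six-fold contraction used in the proof of anti-multiplicativity of the antipode. -/
noncomputable def ctr : (A ⊗[k] (A ⊗[k] A)) →ₗ[k] (A ⊗[k] (A ⊗[k] A)) →ₗ[k] A :=
  TensorProduct.curry <|
    (LinearMap.mul' k A) ∘ₗ
      (TensorProduct.map
        ((LinearMap.mul' k A) ∘ₗ
          (TensorProduct.map (antipode (R := k)) (antipode (R := k))) ∘ₗ
          (TensorProduct.comm k A A).toLinearMap)
        ((LinearMap.mul' k A) ∘ₗ
          (TensorProduct.map (LinearMap.mul' k A)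
            ((antipode (R := k)) ∘ₗ (LinearMap.mul' k A))))) ∘ₗ
      (LinearMap.lTensor (A ⊗[k] A) (TensorProduct.tensorTensorTensorComm k A A A A).toLinearMap) ∘ₗ
      (TensorProduct.tensorTensorTensorComm k A (A ⊗[k] A) A (A ⊗[k] A)).toLinearMap

lemma ctr_apply (p q r p' q' r' : A) :
    ctr (k := k) (p ⊗ₜ (q ⊗ₜ r)) (p' ⊗ₜ (q' ⊗ₜ r')) =
      (antipode (R := k) p' * antipode (R := k) p) * ((q * q') * antipode (R := k) (r * r')) := by
  simp [ctr, TensorProduct.curry_apply, TensorProduct.tensorTensorTensorComm_tmul,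
    LinearMap.mul'_apply, TensorProduct.comm_tmul]

lemma antipode_mul (x y : A) :
    antipode (R := k) (x * y) = antipode (R := k) y * antipode (R := k) x := by
  classical
  set rx := Coalgebra.Repr.arbitrary k x with hrx
  set ry := Coalgebra.Repr.arbitrary k y with hry
  set rlx : ∀ i, Coalgebra.Repr k (rx.left i) (A × A) := fun i => Coalgebra.Repr.arbitrary k _ with hrlx
  set rrx : ∀ i, Coalgebra.Repr k (rx.right i) (A × A) := fun i => Coalgebra.Repr.arbitrary k _ with hrrx
  set rly : ∀ j, Coalgebra.Repr k (ry.left j) (A × A) := fun j => Coalgebra.Repr.arbitrary k _ with hrly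
  set rry : ∀ j, Coalgebra.Repr k (ry.right j) (A × A) := fun j => Coalgebra.Repr.arbitrary k _ with hrry
  have keyx := Coalgebra.sum_tmul_tmul_eq (R := k) rx rlx rrx
  have keyy := Coalgebra.sum_tmul_tmul_eq (R := k) ry rly rry
  have h1 : ctr (k := k)
      (∑ i ∈ rx.index, ∑ s ∈ (rlx i).index,
        (rlx i).left s ⊗ₜ[k] ((rlx i).right s ⊗ₜ[k] rx.right i))
      (∑ j ∈ ry.index, ∑ t ∈ (rly j).index,
        (rly j).left t ⊗ₜ[k] ((rly j).right t ⊗ₜ[k] ry.right j))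
      = antipode (R := k) (x * y) := by
    simp only [map_sum, LinearMap.sum_apply, ctr_apply]
    have inner : ∀ j ∈ ry.index, ∀ i ∈ rx.index,
        ∑ t ∈ (rly j).index, ∑ s ∈ (rlx i).index,
          antipode (R := k) ((rly j).left t) * antipode (R := k) ((rlx i).left s) *
            ((rlx i).right s * (rly j).right t * antipode (R := k) (rx.right i * ry.right j))
        = counit (R := k) (rx.left i) •
            (counit (R := k) (ry.left j) • antipode (R := k) (rx.right i * ry.right j)) := by
      intro j _ i _
      calc ∑ t ∈ (rly j).index, ∑ s ∈ (rlx i).index,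
            antipode (R := k) ((rly j).left t) * antipode (R := k) ((rlx i).left s) *
              ((rlx i).right s * (rly j).right t * antipode (R := k) (rx.right i * ry.right j))
          = ∑ t ∈ (rly j).index,
              antipode (R := k) ((rly j).left t) *
                ((∑ s ∈ (rlx i).index, antipode (R := k) ((rlx i).left s) * (rlx i).right s) *
                  ((rly j).right t * antipode (R := k) (rx.right i * ry.right j))) := by
            refine Finset.sum_congr rfl fun t _ => ?_
            rw [Finset.sum_mul, Finset.mul_sum]
            refine Finset.sum_congr rfl fun s _ => ?_
            simp only [mul_assoc]
        _ = ∑ t ∈ (rly j).index,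
              counit (R := k) (rx.left i) •
                (antipode (R := k) ((rly j).left t) *
                  ((rly j).right t * antipode (R := k) (rx.right i * ry.right j))) := by
            refine Finset.sum_congr rfl fun t _ => ?_
            rw [sum_antipode_mul_eq_smul (rlx i), smul_mul_assoc, one_mul, mul_smul_comm]
        _ = counit (R := k) (rx.left i) •
              ((∑ t ∈ (rly j).index, antipode (R := k) ((rly j).left t) * (rly j).right t) *
                antipode (R := k) (rx.right i * ry.right j)) := by
            rw [← Finset.smul_sum, Finset.sum_mul]
            refine congrArg _ (Finset.sum_congr rfl fun t _ => ?_)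
            rw [mul_assoc]
        _ = counit (R := k) (rx.left i) •
              (counit (R := k) (ry.left j) • antipode (R := k) (rx.right i * ry.right j)) := by
            rw [sum_antipode_mul_eq_smul (rly j), smul_mul_assoc, one_mul]
    calc ∑ j ∈ ry.index, ∑ t ∈ (rly j).index, ∑ i ∈ rx.index, ∑ s ∈ (rlx i).index,
          antipode (R := k) ((rly j).left t) * antipode (R := k) ((rlx i).left s) *
            ((rlx i).right s * (rly j).right t * antipode (R := k) (rx.right i * ry.right j))
        = ∑ j ∈ ry.index, ∑ i ∈ rx.index,
            counit (R := k) (rx.left i) •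
              (counit (R := k) (ry.left j) • antipode (R := k) (rx.right i * ry.right j)) := by
          refine Finset.sum_congr rfl fun j hj => ?_
          rw [Finset.sum_comm]
          exact Finset.sum_congr rfl fun i hi => inner j hj i hi
      _ = antipode (R := k) (x * y) := by
          rw [Finset.sum_comm]
          have hxy : ∑ i ∈ rx.index, ∑ j ∈ ry.index,
              counit (R := k) (rx.left i) • (counit (R := k) (ry.left j) • (rx.right i * ry.right j))
              = x * y := by
            calc ∑ i ∈ rx.index, ∑ j ∈ ry.index,
                  counit (R := k) (rx.left i) • (counit (R := k) (ry.left j) • (rx.right i * ry.right j))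
                = ∑ i ∈ rx.index, ∑ j ∈ ry.index,
                  (counit (R := k) (rx.left i) • rx.right i) * (counit (R := k) (ry.left j) • ry.right j) := by
                  refine Finset.sum_congr rfl fun i _ => Finset.sum_congr rfl fun j _ => ?_
                  rw [smul_mul_assoc, mul_smul_comm]
              _ = (∑ i ∈ rx.index, counit (R := k) (rx.left i) • rx.right i) *
                  (∑ j ∈ ry.index, counit (R := k) (ry.left j) • ry.right j) := by
                  rw [Finset.sum_mul_sum]
              _ = x * y := by rw [counit_left_repr rx, counit_left_repr ry]
          rw [← hxy, map_sum]
          refine Finset.sum_congr rfl fun i _ => ?_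
          rw [map_sum]
          refine Finset.sum_congr rfl fun j _ => ?_
          rw [map_smul, map_smul]
  have h2 : ctr (k := k)
      (∑ i ∈ rx.index, ∑ s ∈ (rrx i).index,
        rx.left i ⊗ₜ[k] ((rrx i).left s ⊗ₜ[k] (rrx i).right s))
      (∑ j ∈ ry.index, ∑ t ∈ (rry j).index,
        ry.left j ⊗ₜ[k] ((rry j).left t ⊗ₜ[k] (rry j).right t))
      = antipode (R := k) y * antipode (R := k) x := by
    simp only [map_sum, LinearMap.sum_apply, ctr_apply]
    have inner : ∀ j ∈ ry.index, ∀ i ∈ rx.index,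
        ∑ t ∈ (rry j).index, ∑ s ∈ (rrx i).index,
          antipode (R := k) (ry.left j) * antipode (R := k) (rx.left i) *
            ((rrx i).left s * (rry j).left t * antipode (R := k) ((rrx i).right s * (rry j).right t))
        = (counit (R := k) (rx.right i) * counit (R := k) (ry.right j)) •
            (antipode (R := k) (ry.left j) * antipode (R := k) (rx.left i)) := by
      intro j _ i _
      have hsum : ∑ t ∈ (rry j).index, ∑ s ∈ (rrx i).index,
          (rrx i).left s * (rry j).left t * antipode (R := k) ((rrx i).right s * (rry j).right t)
          = (counit (R := k) (rx.right i) * counit (R := k) (ry.right j)) • (1 : A) := by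
        rw [Finset.sum_comm]
        have := sum_mul_antipode_eq_smul (R := k) (mulRepr (rrx i) (rry j))
        simp only [mulRepr] at this
        rw [Finset.sum_product] at this
        rw [this, Bialgebra.counit_mul]
      calc ∑ t ∈ (rry j).index, ∑ s ∈ (rrx i).index,
            antipode (R := k) (ry.left j) * antipode (R := k) (rx.left i) *
              ((rrx i).left s * (rry j).left t * antipode (R := k) ((rrx i).right s * (rry j).right t))
          = antipode (R := k) (ry.left j) * antipode (R := k) (rx.left i) *
              (∑ t ∈ (rry j).index, ∑ s ∈ (rrx i).index,
                (rrx i).left s * (rry j).left t * antipode (R := k) ((rrx i).right s * (rry j).right t)) := by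
            rw [Finset.mul_sum]
            refine Finset.sum_congr rfl fun t _ => ?_
            rw [Finset.mul_sum]
        _ = (counit (R := k) (rx.right i) * counit (R := k) (ry.right j)) •
              (antipode (R := k) (ry.left j) * antipode (R := k) (rx.left i)) := by
            rw [hsum, mul_smul_comm, mul_one]
    calc ∑ j ∈ ry.index, ∑ t ∈ (rry j).index, ∑ i ∈ rx.index, ∑ s ∈ (rrx i).index,
          antipode (R := k) (ry.left j) * antipode (R := k) (rx.left i) *
            ((rrx i).left s * (rry j).left t * antipode (R := k) ((rrx i).right s * (rry j).right t))
        = ∑ j ∈ ry.index, ∑ i ∈ rx.index,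
            (counit (R := k) (rx.right i) * counit (R := k) (ry.right j)) •
              (antipode (R := k) (ry.left j) * antipode (R := k) (rx.left i)) := by
          refine Finset.sum_congr rfl fun j hj => ?_
          rw [Finset.sum_comm]
          exact Finset.sum_congr rfl fun i hi => inner j hj i hi
      _ = (∑ j ∈ ry.index, counit (R := k) (ry.right j) • antipode (R := k) (ry.left j)) *
          (∑ i ∈ rx.index, counit (R := k) (rx.right i) • antipode (R := k) (rx.left i)) := by
          rw [Finset.sum_mul_sum]
          refine Finset.sum_congr rfl fun j _ => Finset.sum_congr rfl fun i _ => ?_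
          rw [smul_mul_assoc, mul_smul_comm, smul_smul, mul_comm (counit (R := k) (ry.right j))]
      _ = antipode (R := k) y * antipode (R := k) x := by
          have hx : ∑ i ∈ rx.index, counit (R := k) (rx.right i) • antipode (R := k) (rx.left i)
              = antipode (R := k) x := by
            calc ∑ i ∈ rx.index, counit (R := k) (rx.right i) • antipode (R := k) (rx.left i)
                = ∑ i ∈ rx.index, antipode (R := k) (counit (R := k) (rx.right i) • rx.left i) := by
                  simp [map_smul]
              _ = antipode (R := k) (∑ i ∈ rx.index, counit (R := k) (rx.right i) • rx.left i) :=
                  (map_sum _ _ _).symm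
              _ = antipode (R := k) x := by rw [counit_right_repr rx]
          have hy : ∑ j ∈ ry.index, counit (R := k) (ry.right j) • antipode (R := k) (ry.left j)
              = antipode (R := k) y := by
            calc ∑ j ∈ ry.index, counit (R := k) (ry.right j) • antipode (R := k) (ry.left j)
                = ∑ j ∈ ry.index, antipode (R := k) (counit (R := k) (ry.right j) • ry.left j) := by
                  simp [map_smul]
              _ = antipode (R := k) (∑ j ∈ ry.index, counit (R := k) (ry.right j) • ry.left j) :=
                  (map_sum _ _ _).symm
              _ = antipode (R := k) y := by rw [counit_right_repr ry]
          rw [hx, hy]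
  rw [← h1, keyx, keyy, h2]


lemma antipode_injective (S' : A →ₗ[k] A)
    (hS'l : ∀ a, S' (HopfAlgebra.antipode (R := k) a) = a) :
    Function.Injective (antipode (R := k) (A := A)) :=
  Function.LeftInverse.injective hS'l

set_option linter.unusedSectionVars false
section Sprime

variable (S' : A →ₗ[k] A)
  (hS'l : ∀ a, S' (HopfAlgebra.antipode (R := k) a) = a)
  (hS'r : ∀ a, HopfAlgebra.antipode (R := k) (S' a) = a)
include hS'l hS'r

lemma S'_one : S' 1 = 1 := by
  calc S' 1 = S' (antipode (R := k) 1) := by rw [antipode_one]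
    _ = 1 := hS'l 1

lemma counit_S' (a : A) : counit (R := k) (S' a) = counit (R := k) a := by
  calc counit (R := k) (S' a) = counit (R := k) (antipode (R := k) (S' a)) :=
        (counit_antipode _).symm
    _ = counit (R := k) a := by rw [hS'r]

lemma e_S'_mul {a : A} {ι : Type*} (r : Coalgebra.Repr k a ι) :
    ∑ i ∈ r.index, S' (r.right i) * r.left i = counit (R := k) a • 1 := by
  apply antipode_injective S' hS'l
  rw [map_sum, map_smul, antipode_one]
  calc ∑ i ∈ r.index, antipode (R := k) (S' (r.right i) * r.left i)
      = ∑ i ∈ r.index, antipode (R := k) (r.left i) * r.right i := by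
        refine Finset.sum_congr rfl fun i _ => ?_
        rw [antipode_mul, hS'r]
    _ = counit (R := k) a • 1 := sum_antipode_mul_eq_smul r

lemma e_mul_S' {a : A} {ι : Type*} (r : Coalgebra.Repr k a ι) :
    ∑ i ∈ r.index, r.right i * S' (r.left i) = counit (R := k) a • 1 := by
  apply antipode_injective S' hS'l
  rw [map_sum, map_smul, antipode_one]
  calc ∑ i ∈ r.index, antipode (R := k) (r.right i * S' (r.left i))
      = ∑ i ∈ r.index, r.left i * antipode (R := k) (r.right i) := by
        refine Finset.sum_congr rfl fun i _ => ?_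
        rw [antipode_mul, hS'r]
    _ = counit (R := k) a • 1 := sum_mul_antipode_eq_smul r

lemma e_S'_S'S' {a : A} {ι : Type*} (r : Coalgebra.Repr k a ι) :
    ∑ i ∈ r.index, S' (r.left i) * S' (S' (r.right i)) = counit (R := k) a • 1 := by
  apply antipode_injective S' hS'l
  rw [map_sum, map_smul, antipode_one]
  calc ∑ i ∈ r.index, antipode (R := k) (S' (r.left i) * S' (S' (r.right i)))
      = ∑ i ∈ r.index, S' (r.right i) * r.left i := by
        refine Finset.sum_congr rfl fun i _ => ?_
        rw [antipode_mul, hS'r, hS'r]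
    _ = counit (R := k) a • 1 := e_S'_mul S' hS'l hS'r r

lemma e_S'S'_S' {a : A} {ι : Type*} (r : Coalgebra.Repr k a ι) :
    ∑ i ∈ r.index, S' (S' (r.left i)) * S' (r.right i) = counit (R := k) a • 1 := by
  apply antipode_injective S' hS'l
  rw [map_sum, map_smul, antipode_one]
  calc ∑ i ∈ r.index, antipode (R := k) (S' (S' (r.left i)) * S' (r.right i))
      = ∑ i ∈ r.index, r.right i * S' (r.left i) := by
        refine Finset.sum_congr rfl fun i _ => ?_
        rw [antipode_mul, hS'r, hS'r]
    _ = counit (R := k) a • 1 := e_mul_S' S' hS'l hS'r r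

lemma S'_mul (x y : A) : S' (x * y) = S' y * S' x := by
  apply antipode_injective S' hS'l
  rw [hS'r, antipode_mul, hS'r, hS'r]

end Sprime

noncomputable def conv (f g : A →ₗ[k] k) : A →ₗ[k] k := f ∘ₗ hit g

lemma conv_repr (f g : A →ₗ[k] k) {a : A} {ι : Type*} (r : Coalgebra.Repr k a ι) :
    conv f g a = ∑ i ∈ r.index, f (r.left i) * g (r.right i) := by
  simp only [conv, LinearMap.comp_apply, hit_repr g r, map_sum, map_smul, smul_eq_mul]
  exact Finset.sum_congr rfl fun i _ => mul_comm _ _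

lemma hit_hit (f g : A →ₗ[k] k) (a : A) : hit f (hit g a) = hit (conv f g) a := by
  set r := Coalgebra.Repr.arbitrary k a with hr
  set rl : ∀ i, Coalgebra.Repr k (r.left i) (A × A) := fun i => Coalgebra.Repr.arbitrary k _ with hrl
  set rr : ∀ i, Coalgebra.Repr k (r.right i) (A × A) := fun i => Coalgebra.Repr.arbitrary k _ with hrr
  have key := Coalgebra.sum_tmul_tmul_eq (R := k) r rl rr
  set Φ : A ⊗[k] (A ⊗[k] A) →ₗ[k] A :=
    (TensorProduct.rid k A).toLinearMap ∘ₗ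
      (LinearMap.lTensor A ((LinearMap.mul' k k) ∘ₗ (TensorProduct.map f g))) with hPhi
  have hΦ : ∀ x y z : A, Φ (x ⊗ₜ[k] (y ⊗ₜ[k] z)) = (f y * g z) • x := by
    intro x y z
    simp [hPhi, LinearMap.mul'_apply, TensorProduct.smul_tmul']
  have hkey := congrArg Φ key
  simp only [map_sum, hΦ] at hkey
  calc hit f (hit g a)
      = ∑ i ∈ r.index, ∑ s ∈ (rl i).index,
          (f ((rl i).right s) * g (r.right i)) • (rl i).left s := by
        rw [hit_repr g r, map_sum]
        refine Finset.sum_congr rfl fun i _ => ?_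
        rw [map_smul, hit_repr f (rl i), Finset.smul_sum]
        refine Finset.sum_congr rfl fun s _ => ?_
        rw [smul_smul, mul_comm]
    _ = ∑ i ∈ r.index, ∑ s ∈ (rr i).index,
          (f ((rr i).left s) * g ((rr i).right s)) • r.left i := hkey
    _ = hit (conv f g) a := by
        rw [hit_repr (conv f g) r]
        refine Finset.sum_congr rfl fun i _ => ?_
        rw [conv_repr f g (rr i), Finset.sum_smul]

lemma hit_zero (a : A) : hit (0 : A →ₗ[k] k) a = 0 := by
  simp [hit]

lemma hit_add (f g : A →ₗ[k] k) (a : A) : hit (f + g) a = hit f a + hit g a := by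
  rw [hit_repr _ (Coalgebra.Repr.arbitrary k a), hit_repr f (Coalgebra.Repr.arbitrary k a),
    hit_repr g (Coalgebra.Repr.arbitrary k a), ← Finset.sum_add_distrib]
  refine Finset.sum_congr rfl fun i _ => ?_
  simp [add_smul]

lemma hit_neg (f : A →ₗ[k] k) (a : A) : hit (-f) a = - hit f a := by
  rw [hit_repr _ (Coalgebra.Repr.arbitrary k a), hit_repr f (Coalgebra.Repr.arbitrary k a),
    ← Finset.sum_neg_distrib]
  refine Finset.sum_congr rfl fun i _ => ?_
  simp [neg_smul]

lemma hit_sum {ι : Type*} (s : Finset ι) (F : ι → (A →ₗ[k] k)) (a : A) :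
    hit (∑ i ∈ s, F i) a = ∑ i ∈ s, hit (F i) a := by
  classical
  induction s using Finset.induction_on with
  | empty => simp [hit_zero]
  | insert _ _ h ih => rw [Finset.sum_insert h, Finset.sum_insert h, hit_add, ih]

lemma hit_one (f : A →ₗ[k] k) : hit f (1 : A) = f 1 • 1 := by
  rw [hit_repr f ⟨({0} : Finset ℕ), fun _ => (1 : A), fun _ => (1 : A),
    by simp [Bialgebra.comul_one, Algebra.TensorProduct.one_def]⟩]
  simp

end HopfAux


/-! ### Convolution identities for the calculus data -/

section CalcAux

open Coalgebra HopfAlgebra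

variable (S' : A →ₗ[k] A)
  (hS'l : ∀ a, S' (HopfAlgebra.antipode (R := k) a) = a)
  (hS'r : ∀ a, HopfAlgebra.antipode (R := k) (S' a) = a)
  (χ : Fin n → (A →ₗ[k] k))
  (hθmul : ∀ (i j : Fin n) (a b : A), θ i j (a * b) = ∑ l, θ i l a * θ l j b)
  (hθone : ∀ i j : Fin n, θ i j 1 = if i = j then (1 : k) else 0)
  (hχ : ∀ (i : Fin n) (a b : A),
    χ i (a * b) = (∑ j, χ j a * θ j i b) + Coalgebra.counit a * χ i b)

include hθone hχ in
lemma chi_one (i : Fin n) : χ i 1 = 0 := by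
  have h := hχ i 1 1
  simp only [mul_one, Bialgebra.counit_one, one_mul, hθone, mul_ite, mul_zero,
    Finset.sum_ite_eq', Finset.mem_univ, if_true] at h
  exact right_eq_add.mp h

include hS'l hS'r hθmul hθone in
lemma convC1 (l i : Fin n) :
    ∑ j, conv (θ j i) ((θ l j) ∘ₗ S') = if l = i then (counit : A →ₗ[k] k) else 0 := by
  ext c
  set r := Coalgebra.Repr.arbitrary k c with hrdef
  simp only [LinearMap.sum_apply]
  calc ∑ j, conv (θ j i) ((θ l j) ∘ₗ S') c
      = ∑ j, ∑ t ∈ r.index, θ l j (S' (r.right t)) * θ j i (r.left t) := by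
        refine Finset.sum_congr rfl fun j _ => ?_
        rw [conv_repr _ _ r]
        exact Finset.sum_congr rfl fun t _ => by
          simp only [LinearMap.comp_apply]; ring
    _ = ∑ t ∈ r.index, θ l i (S' (r.right t) * r.left t) := by
        rw [Finset.sum_comm]
        exact Finset.sum_congr rfl fun t _ => (hθmul l i _ _).symm
    _ = θ l i (counit (R := k) c • 1) := by
        rw [← map_sum, e_S'_mul S' hS'l hS'r r]
    _ = (if l = i then (counit : A →ₗ[k] k) else 0) c := by
        by_cases h : l = i <;>
          simp [h, map_smul, hθone, smul_eq_mul, mul_comm]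

include hS'l hS'r hθmul hθone in
lemma convC2 (j m : Fin n) :
    ∑ i, conv ((θ j i) ∘ₗ S') ((θ i m) ∘ₗ S' ∘ₗ S')
      = if j = m then (counit : A →ₗ[k] k) else 0 := by
  ext c
  set r := Coalgebra.Repr.arbitrary k c with hrdef
  simp only [LinearMap.sum_apply]
  calc ∑ i, conv ((θ j i) ∘ₗ S') ((θ i m) ∘ₗ S' ∘ₗ S') c
      = ∑ i, ∑ t ∈ r.index, θ j i (S' (r.left t)) * θ i m (S' (S' (r.right t))) := by
        refine Finset.sum_congr rfl fun i _ => ?_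
        rw [conv_repr _ _ r]
        exact Finset.sum_congr rfl fun t _ => by simp only [LinearMap.comp_apply]
    _ = ∑ t ∈ r.index, θ j m (S' (r.left t) * S' (S' (r.right t))) := by
        rw [Finset.sum_comm]
        exact Finset.sum_congr rfl fun t _ => (hθmul j m _ _).symm
    _ = θ j m (counit (R := k) c • 1) := by
        rw [← map_sum, e_S'_S'S' S' hS'l hS'r r]
    _ = (if j = m then (counit : A →ₗ[k] k) else 0) c := by
        by_cases h : j = m <;>
          simp [h, map_smul, hθone, smul_eq_mul, mul_comm]

include hS'l hS'r hθmul hθone in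
lemma convC5 (l j : Fin n) :
    ∑ m, conv ((θ l m) ∘ₗ S' ∘ₗ S') ((θ m j) ∘ₗ S')
      = if l = j then (counit : A →ₗ[k] k) else 0 := by
  ext c
  set r := Coalgebra.Repr.arbitrary k c with hrdef
  simp only [LinearMap.sum_apply]
  calc ∑ m, conv ((θ l m) ∘ₗ S' ∘ₗ S') ((θ m j) ∘ₗ S') c
      = ∑ m, ∑ t ∈ r.index, θ l m (S' (S' (r.left t))) * θ m j (S' (r.right t)) := by
        refine Finset.sum_congr rfl fun m _ => ?_
        rw [conv_repr _ _ r]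
        exact Finset.sum_congr rfl fun t _ => by simp only [LinearMap.comp_apply]
    _ = ∑ t ∈ r.index, θ l j (S' (S' (r.left t)) * S' (r.right t)) := by
        rw [Finset.sum_comm]
        exact Finset.sum_congr rfl fun t _ => (hθmul l j _ _).symm
    _ = θ l j (counit (R := k) c • 1) := by
        rw [← map_sum, e_S'S'_S' S' hS'l hS'r r]
    _ = (if l = j then (counit : A →ₗ[k] k) else 0) c := by
        by_cases h : l = j <;>
          simp [h, map_smul, hθone, smul_eq_mul, mul_comm]

include hS'l hS'r hθone hχ in
lemma convC3 (j : Fin n) :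
    ∑ l, conv ((θ l j) ∘ₗ S') (χ l) = -((χ j) ∘ₗ S') := by
  ext c
  set r := Coalgebra.Repr.arbitrary k c with hrdef
  simp only [LinearMap.sum_apply, LinearMap.neg_apply, LinearMap.comp_apply]
  calc ∑ l, conv ((θ l j) ∘ₗ S') (χ l) c
      = ∑ l, ∑ t ∈ r.index, χ l (r.right t) * θ l j (S' (r.left t)) := by
        refine Finset.sum_congr rfl fun l _ => ?_
        rw [conv_repr _ _ r]
        exact Finset.sum_congr rfl fun t _ => by
          simp only [LinearMap.comp_apply]; ring
    _ = ∑ t ∈ r.index,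
          (χ j (r.right t * S' (r.left t)) - counit (R := k) (r.right t) * χ j (S' (r.left t))) := by
        rw [Finset.sum_comm]
        refine Finset.sum_congr rfl fun t _ => ?_
        rw [hχ j (r.right t) (S' (r.left t))]
        ring
    _ = χ j (∑ t ∈ r.index, r.right t * S' (r.left t))
          - χ j (S' (∑ t ∈ r.index, counit (R := k) (r.right t) • r.left t)) := by
        rw [Finset.sum_sub_distrib, map_sum, map_sum, map_sum]
        congr 1
        exact Finset.sum_congr rfl fun t _ => by
          simp [map_smul, smul_eq_mul]
    _ = -(χ j (S' c)) := by
        rw [e_mul_S' S' hS'l hS'r r, counit_right_repr r, map_smul, smul_eq_mul,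
          chi_one θ χ hθone hχ j]
        ring

include hS'l hS'r hθone hχ in
lemma convC4 (m : Fin n) :
    ∑ i, conv ((χ i) ∘ₗ S') ((θ i m) ∘ₗ S' ∘ₗ S') = -((χ m) ∘ₗ S' ∘ₗ S') := by
  ext c
  set r := Coalgebra.Repr.arbitrary k c with hrdef
  simp only [LinearMap.sum_apply, LinearMap.neg_apply, LinearMap.comp_apply]
  calc ∑ i, conv ((χ i) ∘ₗ S') ((θ i m) ∘ₗ S' ∘ₗ S') c
      = ∑ i, ∑ t ∈ r.index, χ i (S' (r.left t)) * θ i m (S' (S' (r.right t))) := by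
        refine Finset.sum_congr rfl fun i _ => ?_
        rw [conv_repr _ _ r]
        exact Finset.sum_congr rfl fun t _ => by simp only [LinearMap.comp_apply]
    _ = ∑ t ∈ r.index,
          (χ m (S' (r.left t) * S' (S' (r.right t)))
            - counit (R := k) (r.left t) * χ m (S' (S' (r.right t)))) := by
        rw [Finset.sum_comm]
        refine Finset.sum_congr rfl fun t _ => ?_
        rw [hχ m (S' (r.left t)) (S' (S' (r.right t))), counit_S' S' hS'l hS'r]
        ring
    _ = χ m (∑ t ∈ r.index, S' (r.left t) * S' (S' (r.right t)))
          - χ m (S' (S' (∑ t ∈ r.index, counit (R := k) (r.left t) • r.right t))) := by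
        rw [Finset.sum_sub_distrib, map_sum, map_sum, map_sum, map_sum]
        congr 1
        exact Finset.sum_congr rfl fun t _ => by
          simp [map_smul, smul_eq_mul]
    _ = -(χ m (S' (S' c))) := by
        rw [e_S'_S'S' S' hS'l hS'r r, counit_left_repr r, map_smul, smul_eq_mul,
          chi_one θ χ hθone hχ m]
        ring

include hS'l hS'r hθone hχ in
lemma convC6 (j : Fin n) :
    ∑ m, conv ((χ m) ∘ₗ S' ∘ₗ S') ((θ m j) ∘ₗ S') = -((χ j) ∘ₗ S') := by
  ext c
  set r := Coalgebra.Repr.arbitrary k c with hrdef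
  simp only [LinearMap.sum_apply, LinearMap.neg_apply, LinearMap.comp_apply]
  calc ∑ m, conv ((χ m) ∘ₗ S' ∘ₗ S') ((θ m j) ∘ₗ S') c
      = ∑ m, ∑ t ∈ r.index, χ m (S' (S' (r.left t))) * θ m j (S' (r.right t)) := by
        refine Finset.sum_congr rfl fun m _ => ?_
        rw [conv_repr _ _ r]
        exact Finset.sum_congr rfl fun t _ => by simp only [LinearMap.comp_apply]
    _ = ∑ t ∈ r.index,
          (χ j (S' (S' (r.left t)) * S' (r.right t))
            - counit (R := k) (r.left t) * χ j (S' (r.right t))) := by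
        rw [Finset.sum_comm]
        refine Finset.sum_congr rfl fun t _ => ?_
        rw [hχ j (S' (S' (r.left t))) (S' (r.right t)), counit_S' S' hS'l hS'r,
          counit_S' S' hS'l hS'r]
        ring
    _ = χ j (∑ t ∈ r.index, S' (S' (r.left t)) * S' (r.right t))
          - χ j (S' (∑ t ∈ r.index, counit (R := k) (r.left t) • r.right t)) := by
        rw [Finset.sum_sub_distrib, map_sum, map_sum, map_sum]
        congr 1
        exact Finset.sum_congr rfl fun t _ => by
          simp [map_smul, smul_eq_mul]
    _ = -(χ j (S' c)) := by
        rw [e_S'S'_S' S' hS'l hS'r r, counit_left_repr r, map_smul, smul_eq_mul,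
          chi_one θ χ hθone hχ j]
        ring

end CalcAux


/-! ### Module-level reconstruction lemmas -/

section ModAux

open Coalgebra HopfAlgebra

variable (S' : A →ₗ[k] A)
  (hS'l : ∀ a, S' (HopfAlgebra.antipode (R := k) a) = a)
  (hS'r : ∀ a, HopfAlgebra.antipode (R := k) (S' a) = a)
  (χ : Fin n → (A →ₗ[k] k))
  (hθmul : ∀ (i j : Fin n) (a b : A), θ i j (a * b) = ∑ l, θ i l a * θ l j b)
  (hθone : ∀ i j : Fin n, θ i j 1 = if i = j then (1 : k) else 0)
  (hχ : ∀ (i : Fin n) (a b : A),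
    χ i (a * b) = (∑ j, χ j a * θ j i b) + Coalgebra.counit a * χ i b)

lemma ract_om_apply (j : Fin n) (b : A) (i : Fin n) :
    ract θ (om j) b i = hit (θ j i) b := by
  simp [ract, om, Pi.single_apply, ite_mul, Finset.sum_ite_eq']

lemma lmulPi_om (a : A) (m : Fin n) : lmulPi (k := k) a (om m) = Pi.single m a := by
  funext l
  simp [lmulPi, om, Pi.single_apply, mul_ite]

include hS'l hS'r hθmul hθone in
lemma reconstruct (x : Fin n → A) :
    ∑ j, ract θ (om j) (∑ l, hit ((θ l j) ∘ₗ S') (x l)) = x := by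
  funext i
  rw [Finset.sum_apply]
  calc ∑ j, ract θ (om j) (∑ l, hit ((θ l j) ∘ₗ S') (x l)) i
      = ∑ j, ∑ l, hit (θ j i) (hit ((θ l j) ∘ₗ S') (x l)) := by
        refine Finset.sum_congr rfl fun j _ => ?_
        rw [ract_om_apply, map_sum]
    _ = ∑ l, ∑ j, hit (conv (θ j i) ((θ l j) ∘ₗ S')) (x l) := by
        rw [Finset.sum_comm]
        exact Finset.sum_congr rfl fun l _ => Finset.sum_congr rfl fun j _ => hit_hit _ _ _
    _ = ∑ l, hit (if l = i then (counit : A →ₗ[k] k) else 0) (x l) := by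
        refine Finset.sum_congr rfl fun l _ => ?_
        rw [← hit_sum, convC1 θ S' hS'l hS'r hθmul hθone l i]
    _ = x i := by
        have h : ∀ l, hit (if l = i then (counit : A →ₗ[k] k) else 0) (x l)
            = if l = i then x l else 0 := by
          intro l
          by_cases h : l = i <;> simp [h, hit_counit, hit_zero]
        simp only [h, Finset.sum_ite_eq', Finset.mem_univ, if_true]

include hS'l hS'r hθmul hθone in
lemma homD_apply {f : (Fin n → A) →ₗ[k] A} (hf : f ∈ homD θ) (x : Fin n → A) :
    f x = ∑ j, f (om j) * (∑ l, hit ((θ l j) ∘ₗ S') (x l)) := by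
  conv_lhs => rw [← reconstruct θ S' hS'l hS'r hθmul hθone x]
  rw [map_sum]
  exact Finset.sum_congr rfl fun j _ => hf (om j) _

include hS'l hS'r hχ in
lemma prodRule (m : Fin n) (u w : A) :
    hit ((χ m) ∘ₗ S' ∘ₗ S') (u * w)
      = (∑ l, hit ((χ l) ∘ₗ S' ∘ₗ S') u * hit ((θ l m) ∘ₗ S' ∘ₗ S') w)
        + u * hit ((χ m) ∘ₗ S' ∘ₗ S') w := by
  set ru := Coalgebra.Repr.arbitrary k u with hru
  set rv := Coalgebra.Repr.arbitrary k w with hrv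
  have hS2 : ∀ x y : A, S' (S' (x * y)) = S' (S' x) * S' (S' y) := by
    intro x y
    rw [S'_mul S' hS'l hS'r, S'_mul S' hS'l hS'r]
  have hpart1 : ∀ l, hit ((χ l) ∘ₗ S' ∘ₗ S') u * hit ((θ l m) ∘ₗ S' ∘ₗ S') w
      = ∑ i ∈ ru.index, ∑ j ∈ rv.index,
          (χ l (S' (S' (ru.right i))) * θ l m (S' (S' (rv.right j)))) • (ru.left i * rv.left j) := by
    intro l
    rw [hit_repr _ ru, hit_repr _ rv, Finset.sum_mul_sum]
    refine Finset.sum_congr rfl fun i _ => Finset.sum_congr rfl fun j _ => ?_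
    simp only [LinearMap.comp_apply]
    rw [smul_mul_assoc, mul_smul_comm, smul_smul]
  have hpart2 : u * hit ((χ m) ∘ₗ S' ∘ₗ S') w
      = ∑ i ∈ ru.index, ∑ j ∈ rv.index,
          (counit (R := k) (ru.right i) * χ m (S' (S' (rv.right j)))) • (ru.left i * rv.left j) := by
    have : (∑ i ∈ ru.index, counit (R := k) (ru.right i) • ru.left i) *
        (∑ j ∈ rv.index, χ m (S' (S' (rv.right j))) • rv.left j)
        = ∑ i ∈ ru.index, ∑ j ∈ rv.index,
          (counit (R := k) (ru.right i) * χ m (S' (S' (rv.right j)))) • (ru.left i * rv.left j) := by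
      rw [Finset.sum_mul_sum]
      refine Finset.sum_congr rfl fun i _ => Finset.sum_congr rfl fun j _ => ?_
      rw [smul_mul_assoc, mul_smul_comm, smul_smul]
    rw [← this, counit_right_repr ru, hit_repr _ rv]
    refine congrArg _ (Finset.sum_congr rfl fun j _ => ?_)
    simp only [LinearMap.comp_apply]
  rw [hit_repr _ (mulRepr ru rv)]
  simp only [mulRepr]
  rw [Finset.sum_product]
  calc ∑ i ∈ ru.index, ∑ j ∈ rv.index,
        ((χ m) ∘ₗ S' ∘ₗ S') (ru.right i * rv.right j) • (ru.left i * rv.left j)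
      = ∑ i ∈ ru.index, ∑ j ∈ rv.index,
          (((∑ l, χ l (S' (S' (ru.right i))) * θ l m (S' (S' (rv.right j))))
            + counit (R := k) (ru.right i) * χ m (S' (S' (rv.right j))))
            • (ru.left i * rv.left j)) := by
        refine Finset.sum_congr rfl fun i _ => Finset.sum_congr rfl fun j _ => ?_
        simp only [LinearMap.comp_apply]
        rw [hS2, hχ m, counit_S' S' hS'l hS'r, counit_S' S' hS'l hS'r]
    _ = (∑ i ∈ ru.index, ∑ j ∈ rv.index, ∑ l,
          (χ l (S' (S' (ru.right i))) * θ l m (S' (S' (rv.right j)))) • (ru.left i * rv.left j))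
        + ∑ i ∈ ru.index, ∑ j ∈ rv.index,
          (counit (R := k) (ru.right i) * χ m (S' (S' (rv.right j)))) • (ru.left i * rv.left j) := by
        rw [← Finset.sum_add_distrib]
        refine Finset.sum_congr rfl fun i _ => ?_
        rw [← Finset.sum_add_distrib]
        refine Finset.sum_congr rfl fun j _ => ?_
        rw [add_smul, Finset.sum_smul]
    _ = (∑ l, hit ((χ l) ∘ₗ S' ∘ₗ S') u * hit ((θ l m) ∘ₗ S' ∘ₗ S') w)
        + u * hit ((χ m) ∘ₗ S' ∘ₗ S') w := by
        rw [hpart2]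
        congr 1
        calc ∑ i ∈ ru.index, ∑ j ∈ rv.index, ∑ l,
              (χ l (S' (S' (ru.right i))) * θ l m (S' (S' (rv.right j)))) • (ru.left i * rv.left j)
            = ∑ i ∈ ru.index, ∑ l, ∑ j ∈ rv.index,
              (χ l (S' (S' (ru.right i))) * θ l m (S' (S' (rv.right j)))) • (ru.left i * rv.left j) :=
              Finset.sum_congr rfl fun i _ => Finset.sum_comm
          _ = ∑ l, ∑ i ∈ ru.index, ∑ j ∈ rv.index,
              (χ l (S' (S' (ru.right i))) * θ l m (S' (S' (rv.right j)))) • (ru.left i * rv.left j) :=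
              Finset.sum_comm
          _ = ∑ l, hit ((χ l) ∘ₗ S' ∘ₗ S') u * hit ((θ l m) ∘ₗ S' ∘ₗ S') w :=
              Finset.sum_congr rfl fun l _ => (hpart1 l).symm

end ModAux

/--
Let `A` be a Hopf algebra with bijective antipode `S` (with
inverse `S'`), and let `(θ_ij, χ_i)` determine a left covariant calculus on `A`.
Then `∇(f) = Σ_i ((χ_i ∘ S⁻²) ⊳ f(ω_i))` is the unique hom-connection on `A`
vanishing on the dual basis `ξ_i`.
-/
theorem unique_homConnection_of_leftCovariantCalculus
    (S' : A →ₗ[k] A)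
    (hS'l : ∀ a, S' (HopfAlgebra.antipode (R := k) a) = a)
    (hS'r : ∀ a, HopfAlgebra.antipode (R := k) (S' a) = a)
    (χ : Fin n → (A →ₗ[k] k))
    (hθmul : ∀ (i j : Fin n) (a b : A),
      θ i j (a * b) = ∑ l, θ i l a * θ l j b)
    (hθone : ∀ i j : Fin n, θ i j 1 = if i = j then (1 : k) else 0)
    (hχ : ∀ (i : Fin n) (a b : A),
      χ i (a * b) = (∑ j, χ j a * θ j i b) + Coalgebra.counit a * χ i b)
    (ξ : Fin n → homD θ)
    (hξ : ∀ i j, (ξ i).1 (om j) = if i = j then (1 : A) else 0) :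
    (∃! nabla : homD θ →ₗ[k] A, IsHomConn θ χ nabla ∧ ∀ i, nabla (ξ i) = 0) ∧
    (∀ nabla : homD θ →ₗ[k] A, (IsHomConn θ χ nabla ∧ ∀ i, nabla (ξ i) = 0) →
      ∀ f : homD θ, nabla f = ∑ i, hit ((χ i) ∘ₗ S' ∘ₗ S') (f.1 (om i))) := by
  classical
  -- value of a right `A`-linear map on a single-coordinate vector
  have hsingle : ∀ (j m : Fin n) (b : A),
      (∑ l, hit ((θ l j) ∘ₗ S') ((Pi.single m b : Fin n → A) l)) = hit ((θ m j) ∘ₗ S') b := by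
    intro j m b
    have h : ∀ l, hit ((θ l j) ∘ₗ S') ((Pi.single m b : Fin n → A) l)
        = if l = m then hit ((θ l j) ∘ₗ S') b else 0 := by
      intro l
      rcases eq_or_ne l m with h | h
      · subst h; simp [Pi.single_eq_same]
      · simp [Pi.single_eq_of_ne h, h]
    simp only [h, Finset.sum_ite_eq', Finset.mem_univ, if_true]
  have hfval : ∀ (f : homD θ) (b : A) (m : Fin n),
      f.1 (Pi.single m b : Fin n → A) = ∑ j, f.1 (om j) * hit ((θ m j) ∘ₗ S') b := by
    intro f b m
    rw [homD_apply θ S' hS'l hS'r hθmul hθone f.2 (Pi.single m b)]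
    exact Finset.sum_congr rfl fun j _ => by rw [hsingle j m b]
  have hxival : ∀ (i j : Fin n) (b : A), (ξ i).1 (Pi.single j b : Fin n → A) = hit ((θ j i) ∘ₗ S') b := by
    intro i j b
    rw [hfval (ξ i) b j]
    have h : ∀ m, (ξ i).1 (om m) * hit ((θ j m) ∘ₗ S') b
        = if i = m then hit ((θ j m) ∘ₗ S') b else 0 := by
      intro m
      rw [hξ i m]
      rcases eq_or_ne i m with h | h
      · simp [h]
      · simp [h]
    simp only [h, Finset.sum_ite_eq, Finset.mem_univ, if_true]
  have hxidval : ∀ (i : Fin n) (b : A), (ξ i).1 (dvec χ b) = - hit ((χ i) ∘ₗ S') b := by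
    intro i b
    rw [homD_apply θ S' hS'l hS'r hθmul hθone (ξ i).2 (dvec χ b)]
    have h : ∀ m, (ξ i).1 (om m) * (∑ l, hit ((θ l m) ∘ₗ S') (dvec χ b l))
        = if i = m then (∑ l, hit ((θ l m) ∘ₗ S') (dvec χ b l)) else 0 := by
      intro m
      rw [hξ i m]
      rcases eq_or_ne i m with h | h
      · simp [h]
      · simp [h]
    rw [Finset.sum_congr rfl fun m _ => h m]
    rw [Finset.sum_ite_eq]
    simp only [Finset.mem_univ, if_true]
    calc ∑ l, hit ((θ l i) ∘ₗ S') (dvec χ b l)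
        = ∑ l, hit (conv ((θ l i) ∘ₗ S') (χ l)) b :=
          Finset.sum_congr rfl fun l _ => hit_hit _ _ _
      _ = hit (∑ l, conv ((θ l i) ∘ₗ S') (χ l)) b := (hit_sum _ _ _).symm
      _ = - hit ((χ i) ∘ₗ S') b := by
          rw [convC3 θ S' hS'l hS'r χ hθone hχ i, hit_neg]
  -- the candidate hom-connection
  let nabla₀ : homD θ →ₗ[k] A :=
    { toFun := fun f => ∑ i, hit ((χ i) ∘ₗ S' ∘ₗ S') (f.1 (om i))
      map_add' := fun f g => by
        simp only [Submodule.coe_add, LinearMap.add_apply, map_add, Finset.sum_add_distrib]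
      map_smul' := fun c f => by
        simp only [Submodule.coe_smul, LinearMap.smul_apply, map_smul, Finset.smul_sum,
          RingHom.id_apply] }
  -- it kills the dual basis
  have hzero₀ : ∀ i, nabla₀ (ξ i) = 0 := by
    intro i
    show ∑ m, hit ((χ m) ∘ₗ S' ∘ₗ S') ((ξ i).1 (om m)) = 0
    refine Finset.sum_eq_zero fun m _ => ?_
    rw [hξ i m]
    rcases eq_or_ne i m with h | h
    · rw [if_pos h, hit_one]
      simp only [LinearMap.comp_apply]
      rw [S'_one S' hS'l hS'r, S'_one S' hS'l hS'r, chi_one θ χ hθone hχ m, zero_smul]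
    · rw [if_neg h, map_zero]
  -- it is a hom-connection
  have hconn₀ : IsHomConn θ χ nabla₀ := by
    intro f b
    show ∑ m, hit ((χ m) ∘ₗ S' ∘ₗ S') ((rAct θ f b).1 (om m))
        = (∑ i, hit ((χ i) ∘ₗ S' ∘ₗ S') (f.1 (om i))) * b + f.1 (dvec χ b)
    have hfv : ∀ m, (rAct θ f b).1 (om m) = ∑ j, f.1 (om j) * hit ((θ m j) ∘ₗ S') b := by
      intro m
      show f.1 (lmulPi b (om m)) = _
      rw [lmulPi_om, hfval f b m]
    calc ∑ m, hit ((χ m) ∘ₗ S' ∘ₗ S') ((rAct θ f b).1 (om m))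
        = ∑ m, ∑ j, hit ((χ m) ∘ₗ S' ∘ₗ S') (f.1 (om j) * hit ((θ m j) ∘ₗ S') b) := by
          refine Finset.sum_congr rfl fun m _ => ?_
          rw [hfv m, map_sum]
      _ = ∑ m, ∑ j,
            ((∑ l, hit ((χ l) ∘ₗ S' ∘ₗ S') (f.1 (om j)) *
                hit ((θ l m) ∘ₗ S' ∘ₗ S') (hit ((θ m j) ∘ₗ S') b))
              + f.1 (om j) * hit ((χ m) ∘ₗ S' ∘ₗ S') (hit ((θ m j) ∘ₗ S') b)) :=
          Finset.sum_congr rfl fun m _ => Finset.sum_congr rfl fun j _ =>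
            prodRule θ S' hS'l hS'r χ hχ m (f.1 (om j)) (hit ((θ m j) ∘ₗ S') b)
      _ = (∑ m, ∑ j, ∑ l, hit ((χ l) ∘ₗ S' ∘ₗ S') (f.1 (om j)) *
              hit ((θ l m) ∘ₗ S' ∘ₗ S') (hit ((θ m j) ∘ₗ S') b))
          + ∑ m, ∑ j, f.1 (om j) * hit ((χ m) ∘ₗ S' ∘ₗ S') (hit ((θ m j) ∘ₗ S') b) := by
          rw [← Finset.sum_add_distrib]
          exact Finset.sum_congr rfl fun m _ => by rw [← Finset.sum_add_distrib]
      _ = (∑ i, hit ((χ i) ∘ₗ S' ∘ₗ S') (f.1 (om i))) * b + f.1 (dvec χ b) := by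
          congr 1
          · calc ∑ m, ∑ j, ∑ l, hit ((χ l) ∘ₗ S' ∘ₗ S') (f.1 (om j)) *
                  hit ((θ l m) ∘ₗ S' ∘ₗ S') (hit ((θ m j) ∘ₗ S') b)
                = ∑ j, ∑ l, ∑ m, hit ((χ l) ∘ₗ S' ∘ₗ S') (f.1 (om j)) *
                  hit ((θ l m) ∘ₗ S' ∘ₗ S') (hit ((θ m j) ∘ₗ S') b) := by
                  rw [Finset.sum_comm]
                  exact Finset.sum_congr rfl fun j _ => Finset.sum_comm
              _ = ∑ j, ∑ l, hit ((χ l) ∘ₗ S' ∘ₗ S') (f.1 (om j)) *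
                    hit (∑ m, conv ((θ l m) ∘ₗ S' ∘ₗ S') ((θ m j) ∘ₗ S')) b := by
                  refine Finset.sum_congr rfl fun j _ => Finset.sum_congr rfl fun l _ => ?_
                  rw [← Finset.mul_sum, hit_sum]
                  refine congrArg _ (Finset.sum_congr rfl fun m _ => ?_)
                  rw [hit_hit]
              _ = ∑ j, ∑ l, hit ((χ l) ∘ₗ S' ∘ₗ S') (f.1 (om j)) *
                    (if l = j then b else 0) := by
                  refine Finset.sum_congr rfl fun j _ => Finset.sum_congr rfl fun l _ => ?_
                  rw [convC5 θ S' hS'l hS'r hθmul hθone l j]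
                  rcases eq_or_ne l j with h | h
                  · simp [h, hit_counit]
                  · simp [h, hit_zero]
              _ = (∑ i, hit ((χ i) ∘ₗ S' ∘ₗ S') (f.1 (om i))) * b := by
                  rw [Finset.sum_mul]
                  refine Finset.sum_congr rfl fun j _ => ?_
                  have h : ∀ l, hit ((χ l) ∘ₗ S' ∘ₗ S') (f.1 (om j)) * (if l = j then b else 0)
                      = if l = j then hit ((χ l) ∘ₗ S' ∘ₗ S') (f.1 (om j)) * b else 0 := by
                    intro l
                    rcases eq_or_ne l j with h | h <;> simp [h]
                  simp only [h, Finset.sum_ite_eq', Finset.mem_univ, if_true]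
          · calc ∑ m, ∑ j, f.1 (om j) * hit ((χ m) ∘ₗ S' ∘ₗ S') (hit ((θ m j) ∘ₗ S') b)
                = ∑ j, ∑ m, f.1 (om j) * hit ((χ m) ∘ₗ S' ∘ₗ S') (hit ((θ m j) ∘ₗ S') b) :=
                  Finset.sum_comm
              _ = ∑ j, f.1 (om j) * hit (∑ m, conv ((χ m) ∘ₗ S' ∘ₗ S') ((θ m j) ∘ₗ S')) b := by
                  refine Finset.sum_congr rfl fun j _ => ?_
                  rw [← Finset.mul_sum, hit_sum]
                  refine congrArg _ (Finset.sum_congr rfl fun m _ => ?_)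
                  rw [hit_hit]
              _ = f.1 (dvec χ b) := by
                  rw [homD_apply θ S' hS'l hS'r hθmul hθone f.2 (dvec χ b)]
                  refine Finset.sum_congr rfl fun j _ => ?_
                  congr 1
                  rw [convC6 θ S' hS'l hS'r χ hθone hχ j]
                  refine Eq.symm ?_
                  calc ∑ l, hit ((θ l j) ∘ₗ S') (dvec χ b l)
                      = ∑ l, hit (conv ((θ l j) ∘ₗ S') (χ l)) b :=
                        Finset.sum_congr rfl fun l _ => hit_hit _ _ _
                    _ = hit (∑ l, conv ((θ l j) ∘ₗ S') (χ l)) b := (hit_sum _ _ _).symm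
                    _ = hit (-((χ j) ∘ₗ S')) b := by
                        rw [convC3 θ S' hS'l hS'r χ hθone hχ j]
  -- uniqueness: any hom-connection vanishing on the dual basis is given by the formula
  have partB : ∀ nabla : homD θ →ₗ[k] A, (IsHomConn θ χ nabla ∧ ∀ i, nabla (ξ i) = 0) →
      ∀ f : homD θ, nabla f = ∑ i, hit ((χ i) ∘ₗ S' ∘ₗ S') (f.1 (om i)) := by
    rintro nabla ⟨hconn, hzero⟩ f
    set a : Fin n → A := fun i => ∑ m, hit ((θ i m) ∘ₗ S' ∘ₗ S') (f.1 (om m)) with ha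
    have hval : ∀ j : Fin n,
        (∑ i, (rAct θ (ξ i) (a i)).1) (om j) = f.1 (om j) := by
      intro j
      rw [LinearMap.sum_apply]
      calc ∑ i, (rAct θ (ξ i) (a i)).1 (om j)
          = ∑ i, hit ((θ j i) ∘ₗ S') (a i) := by
            refine Finset.sum_congr rfl fun i _ => ?_
            show (ξ i).1 (lmulPi (a i) (om j)) = _
            rw [lmulPi_om, hxival i j (a i)]
        _ = ∑ i, ∑ m, hit (conv ((θ j i) ∘ₗ S') ((θ i m) ∘ₗ S' ∘ₗ S')) (f.1 (om m)) := by
            refine Finset.sum_congr rfl fun i _ => ?_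
            simp only [ha]
            rw [map_sum]
            exact Finset.sum_congr rfl fun m _ => hit_hit _ _ _
        _ = ∑ m, hit (∑ i, conv ((θ j i) ∘ₗ S') ((θ i m) ∘ₗ S' ∘ₗ S')) (f.1 (om m)) := by
            rw [Finset.sum_comm]
            exact Finset.sum_congr rfl fun m _ => (hit_sum _ _ _).symm
        _ = f.1 (om j) := by
            have h : ∀ m, hit (∑ i, conv ((θ j i) ∘ₗ S') ((θ i m) ∘ₗ S' ∘ₗ S')) (f.1 (om m))
                = if j = m then f.1 (om m) else 0 := by
              intro m
              rw [convC2 θ S' hS'l hS'r hθmul hθone j m]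
              rcases eq_or_ne j m with h | h
              · simp [h, hit_counit]
              · simp [h, hit_zero]
            simp only [h, Finset.sum_ite_eq, Finset.mem_univ, if_true]
    have hdecomp : (∑ i, rAct θ (ξ i) (a i)) = f := by
      apply Subtype.ext
      have hcoe : ((∑ i, rAct θ (ξ i) (a i) : homD θ) : (Fin n → A) →ₗ[k] A)
          = ∑ i, ((rAct θ (ξ i) (a i) : homD θ) : (Fin n → A) →ₗ[k] A) := by
        exact AddSubmonoidClass.coe_finset_sum _ _
      rw [hcoe]
      have hmem : (∑ i, ((rAct θ (ξ i) (a i) : homD θ) : (Fin n → A) →ₗ[k] A)) ∈ homD θ := by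
        rw [← hcoe]; exact (∑ i, rAct θ (ξ i) (a i)).2
      apply LinearMap.ext
      intro x
      rw [homD_apply θ S' hS'l hS'r hθmul hθone hmem x,
        homD_apply θ S' hS'l hS'r hθmul hθone f.2 x]
      refine Finset.sum_congr rfl fun j _ => ?_
      rw [hval j]
    calc nabla f
        = ∑ i, nabla (rAct θ (ξ i) (a i)) := by rw [← hdecomp, map_sum]
      _ = ∑ i, (ξ i).1 (dvec χ (a i)) := by
          refine Finset.sum_congr rfl fun i _ => ?_
          rw [hconn (ξ i) (a i), hzero i, zero_mul, zero_add]
      _ = ∑ i, - hit ((χ i) ∘ₗ S') (a i) :=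
          Finset.sum_congr rfl fun i _ => hxidval i (a i)
      _ = - ∑ i, ∑ m, hit (conv ((χ i) ∘ₗ S') ((θ i m) ∘ₗ S' ∘ₗ S')) (f.1 (om m)) := by
          rw [← Finset.sum_neg_distrib]
          refine Finset.sum_congr rfl fun i _ => ?_
          simp only [ha]
          rw [map_sum]
          exact congrArg Neg.neg (Finset.sum_congr rfl fun m _ => hit_hit _ _ _)
      _ = - ∑ m, hit (∑ i, conv ((χ i) ∘ₗ S') ((θ i m) ∘ₗ S' ∘ₗ S')) (f.1 (om m)) := by
          rw [Finset.sum_comm]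
          exact congrArg Neg.neg (Finset.sum_congr rfl fun m _ => (hit_sum _ _ _).symm)
      _ = ∑ i, hit ((χ i) ∘ₗ S' ∘ₗ S') (f.1 (om i)) := by
          rw [← Finset.sum_neg_distrib]
          refine Finset.sum_congr rfl fun m _ => ?_
          rw [convC4 θ S' hS'l hS'r χ hθone hχ m, hit_neg, neg_neg]
  refine ⟨⟨nabla₀, ⟨hconn₀, hzero₀⟩, ?_⟩, partB⟩
  intro y hy
  apply LinearMap.ext
  intro f
  rw [partB y hy f]
  rfl

end Stmt13
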